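/- Let B be a complete normed ring that is a normed ℝ-algebra, and let a : B with ‖a‖ < 1. Then the two binomial series S := ∑'_{n : ℕ} Ring.choose (1/2 : ℝ) n • a^n and F := ∑'_{n : ℕ} Ring.choose (−1/2 : ℝ) n • a^n are both summable and are mutually inverse: S * F = 1 and F * S = 1. -/

import Mathlib

open Finset

lemma ring_choose_succ (r : ℝ) (n : ℕ) :
    Ring.choose r (n + 1) = Ring.choose r n * (r - n) / (n + 1) := by
  have h1 := Ring.descPochhammer_eq_factorial_smul_choose (R := ℝ) r (n + 1)
  have h0 := Ring.descPochhammer_eq_factorial_smul_choose (R := ℝ) r n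
  rw [descPochhammer_succ_right, Polynomial.smeval_mul, h0, Polynomial.smeval_sub,
    Polynomial.smeval_X, Polynomial.smeval_natCast] at h1
  have h1' : (n.factorial : ℝ) * (Ring.choose r n * (r - n)) =
      (n.factorial : ℝ) * ((n + 1) * Ring.choose r (n + 1)) := by
    have : (n.factorial : ℝ) * Ring.choose r n * (r - n) =
        ((n + 1).factorial : ℝ) * Ring.choose r (n + 1) := by simpa [nsmul_eq_mul] using h1
    rw [Nat.factorial_succ, Nat.cast_mul, Nat.cast_add, Nat.cast_one] at this
    linarith [this]
  have hn : (n.factorial : ℝ) ≠ 0 := by positivity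
  have h2 := mul_left_cancel₀ hn h1'
  have hpos : (n : ℝ) + 1 ≠ 0 := by positivity
  field_simp
  linarith [h2]

lemma ring_choose_abs_le (c : ℝ) (hc : ∀ n : ℕ, |c - n| ≤ n + 1) (n : ℕ) :
    |Ring.choose c n| ≤ 1 := by
  induction n with
  | zero => simp [Ring.choose_zero_right]
  | succ n ih =>
    rw [ring_choose_succ]
    rw [abs_div, abs_mul]
    have h1 : |c - n| ≤ (n : ℝ) + 1 := hc n
    have h2 : |((n : ℝ) + 1)| = (n : ℝ) + 1 := abs_of_pos (by positivity)
    rw [h2, div_le_one (by positivity)]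
    calc |Ring.choose c n| * |c - n| ≤ 1 * ((n : ℝ) + 1) := by
          apply mul_le_mul ih h1 (abs_nonneg _) zero_le_one
      _ = (n : ℝ) + 1 := one_mul _

lemma half_bd : ∀ n : ℕ, |(1/2 : ℝ) - n| ≤ n + 1 := by
  intro n
  rw [abs_le]
  constructor <;> push_cast <;> nlinarith [Nat.cast_nonneg (α := ℝ) n]

lemma neg_half_bd : ∀ n : ℕ, |(-1/2 : ℝ) - n| ≤ n + 1 := by
  intro n
  rw [abs_le]
  constructor <;> push_cast <;> nlinarith [Nat.cast_nonneg (α := ℝ) n]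

section
variable {B : Type*} [NormedRing B] [CompleteSpace B] [NormedAlgebra ℝ B]

lemma summable_norm_aux (a : B) (ha : ‖a‖ < 1) (c : ℝ) (hc : ∀ n : ℕ, |Ring.choose c n| ≤ 1) :
    Summable (fun n : ℕ => ‖Ring.choose c n • a ^ n‖) := by
  have hgeo : Summable (fun n : ℕ => (max ‖(1 : B)‖ 1) * ‖a‖ ^ n) :=
    (summable_geometric_of_lt_one (norm_nonneg a) ha).mul_left _
  refine Summable.of_nonneg_of_le (fun n => norm_nonneg _) (fun n => ?_) hgeo
  rw [norm_smul, Real.norm_eq_abs]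
  have h1 : ‖a ^ n‖ ≤ max ‖(1 : B)‖ 1 * ‖a‖ ^ n := by
    cases n with
    | zero => simpa using le_max_left ‖(1 : B)‖ 1
    | succ m =>
      calc ‖a ^ (m + 1)‖ ≤ ‖a‖ ^ (m + 1) := norm_pow_le' a (Nat.succ_pos m)
        _ ≤ max ‖(1 : B)‖ 1 * ‖a‖ ^ (m + 1) := by
            nth_rewrite 1 [← one_mul (‖a‖ ^ (m + 1))]
            exact mul_le_mul_of_nonneg_right (le_max_right _ _) (by positivity)
  calc |Ring.choose c n| * ‖a ^ n‖ ≤ 1 * ‖a ^ n‖ :=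
        mul_le_mul_of_nonneg_right (hc n) (norm_nonneg _)
    _ = ‖a ^ n‖ := one_mul _
    _ ≤ _ := h1

end

/-- **Vierbein and inverse vierbein series are mutually inverse.**
In a complete normed `ℝ`-algebra, for `‖a‖ < 1` the binomial series
`S = ∑ Ring.choose (1/2) n • a^n` and `F = ∑ Ring.choose (−1/2) n • a^n` are both
summable and satisfy `S * F = 1` and `F * S = 1`. -/
theorem binomialSeries_half_mul_negHalf {B : Type*} [NormedRing B] [CompleteSpace B]
    [NormedAlgebra ℝ B] (a : B) (ha : ‖a‖ < 1) :
    Summable (fun n : ℕ => Ring.choose (1 / 2 : ℝ) n • a ^ n) ∧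
    Summable (fun n : ℕ => Ring.choose (-1 / 2 : ℝ) n • a ^ n) ∧
      (∑' n : ℕ, Ring.choose (1 / 2 : ℝ) n • a ^ n) *
          (∑' n : ℕ, Ring.choose (-1 / 2 : ℝ) n • a ^ n) = 1 ∧
      (∑' n : ℕ, Ring.choose (-1 / 2 : ℝ) n • a ^ n) *
          (∑' n : ℕ, Ring.choose (1 / 2 : ℝ) n • a ^ n) = 1 := by
  have hb1 : ∀ n : ℕ, |Ring.choose (1/2 : ℝ) n| ≤ 1 := ring_choose_abs_le _ half_bd
  have hb2 : ∀ n : ℕ, |Ring.choose (-1/2 : ℝ) n| ≤ 1 := ring_choose_abs_le _ neg_half_bd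
  have hn1 := summable_norm_aux a ha _ hb1
  have hn2 := summable_norm_aux a ha _ hb2
  have hs1 : Summable (fun n : ℕ => Ring.choose (1/2 : ℝ) n • a ^ n) := .of_norm hn1
  have hs2 : Summable (fun n : ℕ => Ring.choose (-1/2 : ℝ) n • a ^ n) := .of_norm hn2
  refine ⟨hs1, hs2, ?_, ?_⟩
  · rw [tsum_mul_tsum_eq_tsum_sum_antidiagonal_of_summable_norm hn1 hn2]
    have key : ∀ n : ℕ, (∑ kl ∈ Finset.HasAntidiagonal.antidiagonal n,
        (Ring.choose (1/2 : ℝ) kl.1 • a ^ kl.1) * (Ring.choose (-1/2 : ℝ) kl.2 • a ^ kl.2)) =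
        (if n = 0 then (1:B) else 0) := by
      intro n
      have h1 : ∀ kl ∈ Finset.HasAntidiagonal.antidiagonal n,
          (Ring.choose (1/2 : ℝ) kl.1 • a ^ kl.1) * (Ring.choose (-1/2 : ℝ) kl.2 • a ^ kl.2) =
          (Ring.choose (1/2 : ℝ) kl.1 * Ring.choose (-1/2 : ℝ) kl.2) • a ^ n := by
        intro kl hkl
        rw [smul_mul_smul_comm, ← pow_add, Finset.HasAntidiagonal.mem_antidiagonal.mp hkl]
      rw [Finset.sum_congr rfl h1, ← Finset.sum_smul, ← Ring.add_choose_eq n (Commute.all _ _)]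
      have : (1/2 : ℝ) + (-1/2) = ((0 : ℕ) : ℝ) := by norm_num
      rw [this, Ring.choose_natCast]
      cases n with
      | zero => simp
      | succ m => simp [Nat.choose_eq_zero_of_lt (Nat.succ_pos m)]
    rw [tsum_congr key, tsum_eq_single 0 (fun b hb => by simp [hb])]
    simp
  · rw [tsum_mul_tsum_eq_tsum_sum_antidiagonal_of_summable_norm hn2 hn1]
    have key : ∀ n : ℕ, (∑ kl ∈ Finset.HasAntidiagonal.antidiagonal n,
        (Ring.choose (-1/2 : ℝ) kl.1 • a ^ kl.1) * (Ring.choose (1/2 : ℝ) kl.2 • a ^ kl.2)) =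
        (if n = 0 then (1:B) else 0) := by
      intro n
      have h1 : ∀ kl ∈ Finset.HasAntidiagonal.antidiagonal n,
          (Ring.choose (-1/2 : ℝ) kl.1 • a ^ kl.1) * (Ring.choose (1/2 : ℝ) kl.2 • a ^ kl.2) =
          (Ring.choose (-1/2 : ℝ) kl.1 * Ring.choose (1/2 : ℝ) kl.2) • a ^ n := by
        intro kl hkl
        rw [smul_mul_smul_comm, ← pow_add, Finset.HasAntidiagonal.mem_antidiagonal.mp hkl]
      rw [Finset.sum_congr rfl h1, ← Finset.sum_smul, ← Ring.add_choose_eq n (Commute.all _ _)]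
      have : (-1/2 : ℝ) + (1/2) = ((0 : ℕ) : ℝ) := by norm_num
      rw [this, Ring.choose_natCast]
      cases n with
      | zero => simp
      | succ m => simp [Nat.choose_eq_zero_of_lt (Nat.succ_pos m)]
    rw [tsum_congr key, tsum_eq_single 0 (fun b hb => by simp [hb])]
    simp
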